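/- Let Φ : C → D be a K-linear functor between Krull-Schmidt categories such that (i) Φ sends indecomposable objects to indecomposable objects and the induced map End_C(X) → End_D(Φ(X)) is a local ring homomorphism for every indecomposable X, and (ii) for indecomposable X, Y, X ≅ Y if and only if Φ(X) ≅ Φ(Y). Then a morphism f : M → N in C is a split surjection if and only if Φ(f) is a split surjection. -/

import Mathlib

open CategoryTheory CategoryTheory.Limits

/-- A (preadditive) category is Krull–Schmidt if every object is a finite direct sum of
objects having local endomorphism rings. -/
def IsKrullSchmidt (C : Type*) [Category C] [Preadditive C] [HasFiniteBiproducts C] : Prop :=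
  ∀ X : C, ∃ (n : ℕ) (f : Fin n → C),
    Nonempty (X ≅ ⨁ f) ∧ ∀ j, IsLocalRing (End (f j))

section RingAux

variable {R : Type*} [Ring R] [IsLocalRing R]

lemma myIsUnit_or_of_add {a b : R} (h : IsUnit (a + b)) : IsUnit a ∨ IsUnit b := by
  obtain ⟨u, hu⟩ := h
  have h1 : (↑u⁻¹ * a) + (↑u⁻¹ * b) = 1 := by
    rw [← mul_add, ← hu, Units.inv_mul]
  rcases IsLocalRing.isUnit_or_isUnit_of_add_one h1 with h | h
  · left
    have : a = ↑u * (↑u⁻¹ * a) := by rw [← mul_assoc, Units.mul_inv, one_mul]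
    rw [this]; exact u.isUnit.mul h
  · right
    have : b = ↑u * (↑u⁻¹ * b) := by rw [← mul_assoc, Units.mul_inv, one_mul]
    rw [this]; exact u.isUnit.mul h

lemma myUnit_of_sum {ι : Type*} [DecidableEq ι] (s : Finset ι) (a : ι → R)
    (h : IsUnit (∑ i ∈ s, a i)) : ∃ i ∈ s, IsUnit (a i) := by
  induction s using Finset.induction_on with
  | empty => simp only [Finset.sum_empty] at h; exact absurd h not_isUnit_zero
  | insert _ _ hx ih =>
    rw [Finset.sum_insert hx] at h
    rcases myIsUnit_or_of_add h with h | h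
    · exact ⟨_, Finset.mem_insert_self _ _, h⟩
    · obtain ⟨i, hi, hu⟩ := ih h
      exact ⟨i, Finset.mem_insert_of_mem hi, hu⟩

end RingAux

section EndAux

variable {C : Type*} [Category C] [Preadditive C]

/-- Ring equivalence of endomorphism rings along an isomorphism. -/
def endRingEquiv {X Y : C} (α : X ≅ Y) : End X ≃+* End Y :=
  { α.conj with
    map_add' := fun f g => by
      show α.inv ≫ (f + g) ≫ α.hom = α.inv ≫ f ≫ α.hom + α.inv ≫ g ≫ α.hom
      have h0 : (f + g : End X) = (f : X ⟶ X) + (g : X ⟶ X) := rfl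
      rw [h0, Preadditive.add_comp, Preadditive.comp_add] }

lemma isLocalRing_end_of_iso {X Y : C} (α : X ≅ Y) (h : IsLocalRing (End X)) :
    IsLocalRing (End Y) := by
  have : Nontrivial (End Y) := (endRingEquiv α).symm.toEquiv.nontrivial
  refine ⟨fun {a b} hab => ?_⟩
  have : (endRingEquiv α).symm a + (endRingEquiv α).symm b = 1 := by
    rw [← map_add, hab, map_one]
  rcases IsLocalRing.isUnit_or_isUnit_of_add_one this with h' | h'
  · exact Or.inl (by simpa using h'.map (endRingEquiv α))
  · exact Or.inr (by simpa using h'.map (endRingEquiv α))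

end EndAux

section IndecAux

variable {C : Type*} [Category C] [Preadditive C] [HasFiniteBiproducts C] [HasBinaryBiproducts C]

lemma indec_of_local_end {X : C} (h : IsLocalRing (End X)) : Indecomposable X := by
  constructor
  · intro hz
    exact one_ne_zero (α := End X) ((IsZero.iff_id_eq_zero X).1 hz)
  · intro Y Z α
    set e : End X := α.hom ≫ biprod.fst ≫ biprod.inl ≫ α.inv with he
    set q : End X := α.hom ≫ biprod.snd ≫ biprod.inr ≫ α.inv with hq
    have hsum : q + e = 1 := by
      show (α.hom ≫ biprod.snd ≫ biprod.inr ≫ α.inv : X ⟶ X) +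
        (α.hom ≫ biprod.fst ≫ biprod.inl ≫ α.inv : X ⟶ X) = 𝟙 X
      calc _ = α.hom ≫ (biprod.fst ≫ biprod.inl + biprod.snd ≫ biprod.inr) ≫ α.inv := by
            rw [Preadditive.add_comp, Preadditive.comp_add, add_comm]
            simp only [Category.assoc]
        _ = 𝟙 X := by rw [biprod.total]; simp
    have hee : e * e = e := by
      show (α.hom ≫ biprod.fst ≫ biprod.inl ≫ α.inv : X ⟶ X) ≫
        (α.hom ≫ biprod.fst ≫ biprod.inl ≫ α.inv) = (e : X ⟶ X)
      simp [he]
    have hqq : q * q = q := by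
      show (α.hom ≫ biprod.snd ≫ biprod.inr ≫ α.inv : X ⟶ X) ≫
        (α.hom ≫ biprod.snd ≫ biprod.inr ≫ α.inv) = (q : X ⟶ X)
      simp [hq]
    rcases IsLocalRing.isUnit_or_isUnit_of_add_one hsum with h' | h'
    · left
      have hq1 : q = 1 := h'.mul_left_cancel (by rw [mul_one]; exact hqq)
      have he0 : e = 0 := by
        have := hsum; rw [hq1] at this
        have : (1 : End X) + e = 1 + 0 := by rw [this, add_zero]
        exact add_left_cancel this
      have hfi : (biprod.fst ≫ biprod.inl : Y ⊞ Z ⟶ Y ⊞ Z) = 0 := by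
        have h1 : α.inv ≫ (e : X ⟶ X) ≫ α.hom = biprod.fst ≫ biprod.inl := by
          simp [he]
        rw [he0] at h1
        simpa using h1.symm
      rw [IsZero.iff_id_eq_zero]
      calc 𝟙 Y = biprod.inl ≫ (biprod.fst ≫ biprod.inl) ≫ biprod.fst := by simp
      _ = 0 := by rw [hfi]; simp
    · right
      have he1 : e = 1 := h'.mul_left_cancel (by rw [mul_one]; exact hee)
      have hq0 : q = 0 := by
        have := hsum; rw [he1] at this
        have : q + (1 : End X) = 0 + 1 := by rw [this, zero_add]
        exact add_right_cancel this
      have hfi : (biprod.snd ≫ biprod.inr : Y ⊞ Z ⟶ Y ⊞ Z) = 0 := by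
        have h1 : α.inv ≫ (q : X ⟶ X) ≫ α.hom = biprod.snd ≫ biprod.inr := by
          simp [hq]
        rw [hq0] at h1
        simpa using h1.symm
      rw [IsZero.iff_id_eq_zero]
      calc 𝟙 Z = biprod.inr ≫ (biprod.snd ≫ biprod.inr) ≫ biprod.snd := by simp
      _ = 0 := by rw [hfi]; simp

/-- Splitting off the first summand of a biproduct over `Fin (n+1)`. -/
noncomputable def finSplit {n : ℕ} (g : Fin (n + 1) → C) :
    (⨁ g) ≅ g 0 ⊞ (⨁ fun i : Fin n => g i.succ) where
  hom := biprod.lift (biproduct.π g 0) (biproduct.lift fun i => biproduct.π g i.succ)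
  inv := biprod.desc (biproduct.ι g 0) (biproduct.desc fun i => biproduct.ι g i.succ)
  hom_inv_id := by
    rw [biprod.lift_desc, biproduct.lift_desc, ← biproduct.total, Fin.sum_univ_succ]
  inv_hom_id := by
    apply biprod.hom_ext' <;> apply biprod.hom_ext <;>
      (try ext) <;>
      simp [biproduct.ι_π, Fin.succ_ne_zero, (Fin.succ_ne_zero _).symm,
        Fin.succ_inj, Fin.succ_injective]

omit [HasBinaryBiproducts C] in
lemma isZero_of_iso_biproduct_zero {X : C} (g : Fin 0 → C) (α : X ≅ ⨁ g) : IsZero X := by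
  rw [IsZero.iff_id_eq_zero]
  have : 𝟙 (⨁ g) = 0 := biproduct.hom_ext _ _ (fun j => j.elim0)
  calc 𝟙 X = α.hom ≫ 𝟙 (⨁ g) ≫ α.inv := by simp
    _ = 0 := by rw [this]; simp

/-- A biproduct with a zero right summand is isomorphic to the left summand. -/
noncomputable def biprodIsoLeft {A B : C} (hB : IsZero B) : A ⊞ B ≅ A where
  hom := biprod.fst
  inv := biprod.inl
  hom_inv_id := by
    apply biprod.hom_ext
    · simp
    · exact hB.eq_of_tgt _ _
  inv_hom_id := by simp

lemma local_end_of_indec (hC : IsKrullSchmidt C) {X : C} (hX : Indecomposable X) :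
    IsLocalRing (End X) := by
  obtain ⟨n, g, ⟨α⟩, hloc⟩ := hC X
  match n with
  | 0 => exact absurd (isZero_of_iso_biproduct_zero g α) hX.1
  | n + 1 =>
    rcases hX.2 _ _ (α ≪≫ finSplit g) with hz | hz
    · exact absurd ((IsZero.iff_id_eq_zero _).1 hz)
        (one_ne_zero (α := End (g 0)))
    · exact isLocalRing_end_of_iso (α ≪≫ finSplit g ≪≫ biprodIsoLeft hz).symm (hloc 0)

end IndecAux

section Steps

variable {C : Type*} [Category C] [Preadditive C] [HasBinaryBiproducts C]
variable {D : Type*} [Category D] [Preadditive D] [HasBinaryBiproducts D]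
variable (Φ : C ⥤ D) [Φ.Additive]

omit [HasBinaryBiproducts C] in
lemma hk_gen {M A : C} (p : M ⟶ A) (s₁ : A ⟶ M) (hs₁ : s₁ ≫ p = 𝟙 A) :
    (𝟙 M - p ≫ s₁) ≫ p = 0 := by
  rw [Preadditive.sub_comp, Category.id_comp, Category.assoc, hs₁, Category.comp_id, sub_self]

omit [Preadditive C] [HasBinaryBiproducts C] [Preadditive D] [HasBinaryBiproducts D]
  [Φ.Additive] in
lemma step_comp_iso {M N N' : C} (f : M ⟶ N) (Ψ : N ≅ N')
    (h : IsSplitEpi (Φ.map f)) : IsSplitEpi (Φ.map (f ≫ Ψ.hom)) := by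
  obtain ⟨⟨T, hT⟩⟩ := h
  refine IsSplitEpi.mk' ⟨Φ.map Ψ.inv ≫ T, ?_⟩
  rw [Φ.map_comp, Category.assoc, reassoc_of% hT, ← Φ.map_comp, Ψ.inv_hom_id, Φ.map_id]

omit [Preadditive D] [HasBinaryBiproducts D] [Φ.Additive] in
lemma step_fst {M A B : C} (f' : M ⟶ A ⊞ B)
    (h : IsSplitEpi (Φ.map f')) : IsSplitEpi (Φ.map (f' ≫ biprod.fst)) := by
  obtain ⟨⟨T, hT⟩⟩ := h
  refine IsSplitEpi.mk' ⟨Φ.map biprod.inl ≫ T, ?_⟩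
  rw [Φ.map_comp, Category.assoc, reassoc_of% hT, ← Φ.map_comp, biprod.inl_fst, Φ.map_id]

omit [HasBinaryBiproducts D] in
lemma step_w {M A B : C} (f' : M ⟶ A ⊞ B) (s₁ : A ⟶ M)
    (h : IsSplitEpi (Φ.map f')) :
    IsSplitEpi (Φ.map ((𝟙 M - (f' ≫ biprod.fst) ≫ s₁) ≫ f' ≫ biprod.snd)) := by
  obtain ⟨⟨T, hT⟩⟩ := h
  refine IsSplitEpi.mk' ⟨Φ.map biprod.inr ≫ T, ?_⟩
  have hexp : (𝟙 M - (f' ≫ biprod.fst) ≫ s₁) ≫ f' ≫ biprod.snd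
      = f' ≫ biprod.snd - f' ≫ biprod.fst ≫ s₁ ≫ f' ≫ biprod.snd := by
    rw [Preadditive.sub_comp, Category.id_comp]
    simp only [Category.assoc]
  rw [hexp, Functor.map_sub, Preadditive.comp_sub]
  simp only [Functor.map_comp, Category.assoc]
  rw [reassoc_of% hT, reassoc_of% hT]
  rw [← Φ.map_comp_assoc, biprod.inr_fst, Φ.map_zero, zero_comp, sub_zero,
    ← Φ.map_comp, biprod.inr_snd, Φ.map_id]

omit [Preadditive D] [HasBinaryBiproducts D] [Φ.Additive] in
lemma assemble {M A B : C} (f' : M ⟶ A ⊞ B) (s₁ : A ⟶ M) (k : M ⟶ M)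
    (hs₁ : s₁ ≫ f' ≫ biprod.fst = 𝟙 A)
    (hkf : k ≫ f' ≫ biprod.fst = 0)
    (t : B ⟶ M) (ht : (t ≫ k) ≫ f' ≫ biprod.snd = 𝟙 B) : IsSplitEpi f' := by
  have E2 : t ≫ k ≫ f' ≫ biprod.fst = 0 := by rw [hkf, comp_zero]
  have E3 : t ≫ k ≫ f' ≫ biprod.snd = 𝟙 B := by rw [← Category.assoc]; exact ht
  refine IsSplitEpi.mk'
    ⟨biprod.desc (s₁ - (s₁ ≫ f' ≫ biprod.snd) ≫ t ≫ k) (t ≫ k), ?_⟩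
  apply biprod.hom_ext' <;> apply biprod.hom_ext <;>
    simp only [Category.assoc, biprod.inl_desc_assoc, biprod.inr_desc_assoc,
      Preadditive.sub_comp, Category.id_comp, Category.comp_id,
      biprod.inl_fst, biprod.inl_snd, biprod.inr_fst, biprod.inr_snd,
      hs₁, E2, E3, comp_zero, sub_zero, sub_self]

lemma succ_step {M A B : C} (f' : M ⟶ A ⊞ B)
    (hfst : IsSplitEpi (f' ≫ biprod.fst))
    (hindB : ∀ w : M ⟶ B, IsSplitEpi (Φ.map w) → IsSplitEpi w)
    (hf' : IsSplitEpi (Φ.map f')) : IsSplitEpi f' := by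
  obtain ⟨⟨s₁, hs₁⟩⟩ := hfst
  have hkf : (𝟙 M - (f' ≫ biprod.fst) ≫ s₁) ≫ f' ≫ biprod.fst = 0 :=
    hk_gen (f' ≫ biprod.fst) s₁ hs₁
  obtain ⟨⟨t, ht⟩⟩ := hindB _ (step_w Φ f' s₁ hf')
  exact assemble f' s₁ _ hs₁ hkf t (by rw [Category.assoc]; exact ht)

omit [Preadditive C] [HasBinaryBiproducts C] [Preadditive D] [HasBinaryBiproducts D]
  [Φ.Additive] in
lemma splitEpi_of_comp_iso {M N N' : C} (f : M ⟶ N) (Ψ : N ≅ N')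
    (h : IsSplitEpi (f ≫ Ψ.hom)) : IsSplitEpi f := by
  obtain ⟨⟨s, hs⟩⟩ := h
  refine IsSplitEpi.mk' ⟨Ψ.hom ≫ s, ?_⟩
  have h9 : s ≫ f = Ψ.inv := by
    rw [← Category.comp_id (s ≫ f), ← Ψ.hom_inv_id, ← Category.assoc, Category.assoc s, hs,
      Category.id_comp]
  rw [Category.assoc, h9, Ψ.hom_inv_id]

end Steps

section Core

variable {C : Type*} [Category C] [Preadditive C] [HasFiniteBiproducts C] [HasBinaryBiproducts C]
variable {D : Type*} [Category D] [Preadditive D] [HasFiniteBiproducts D] [HasBinaryBiproducts D]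

lemma core_indec (hC : IsKrullSchmidt C) (hD : IsKrullSchmidt D)
    (Φ : C ⥤ D) [Φ.Additive]
    (h1 : ∀ X : C, Indecomposable X → Indecomposable (Φ.obj X))
    (h2 : ∀ X : C, Indecomposable X → ∀ e : End X, IsIso (Φ.map e) → IsIso e)
    (h3 : ∀ X Y : C, Indecomposable X → Indecomposable Y →
      (Nonempty (X ≅ Y) ↔ Nonempty (Φ.obj X ≅ Φ.obj Y)))
    {M A : C} (hA : Indecomposable A) (f : M ⟶ A)
    (hf : IsSplitEpi (Φ.map f)) : IsSplitEpi f := by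
  obtain ⟨n, m, ⟨φ⟩, hloc⟩ := hC M
  obtain ⟨⟨T, hT⟩⟩ := hf
  have hAD : Indecomposable (Φ.obj A) := h1 A hA
  have hlocA : IsLocalRing (End (Φ.obj A)) := local_end_of_indec hD hAD
  set g : (⨁ m) ⟶ A := φ.inv ≫ f with hg
  set a : Fin n → End (Φ.obj A) := fun i =>
    ((T ≫ Φ.map φ.hom ≫ Φ.map (biproduct.π m i)) ≫
      Φ.map (biproduct.ι m i ≫ g) : Φ.obj A ⟶ Φ.obj A) with ha
  have key : (1 : End (Φ.obj A)) = ∑ i : Fin n, a i := by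
    have e1 : ∑ i : Fin n, (biproduct.π m i ≫ biproduct.ι m i ≫ g) = g := by
      simp only [← Category.assoc]
      rw [← Preadditive.sum_comp, biproduct.total, Category.id_comp]
    calc (1 : End (Φ.obj A)) = T ≫ Φ.map f := hT.symm
      _ = T ≫ Φ.map φ.hom ≫ Φ.map g := by
          rw [← Φ.map_comp]; congr 1; simp [hg]
      _ = ∑ i : Fin n, a i := by
          conv_lhs => rw [← e1]
          rw [Φ.map_sum, Preadditive.comp_sum, Preadditive.comp_sum, ha]
          refine Finset.sum_congr rfl fun i _ => ?_
          simp only [Φ.map_comp, Category.assoc]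
  obtain ⟨i, _, hi⟩ := myUnit_of_sum (R := End (Φ.obj A)) Finset.univ a
    (by rw [← key]; exact isUnit_one)
  set b : m i ⟶ A := biproduct.ι m i ≫ g with hb
  set r : Φ.obj A ⟶ Φ.obj (m i) := T ≫ Φ.map φ.hom ≫ Φ.map (biproduct.π m i) with hr
  have hcis : IsIso (r ≫ Φ.map b) := by
    rw [isUnit_iff_isIso] at hi; exact hi
  set ρ : Φ.obj A ⟶ Φ.obj (m i) := inv (r ≫ Φ.map b) ≫ r with hρ
  have hρb : ρ ≫ Φ.map b = 𝟙 (Φ.obj A) := by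
    rw [hρ, Category.assoc, IsIso.inv_hom_id]
  have hmi : Indecomposable (m i) := indec_of_local_end (hloc i)
  have hlocmi : IsLocalRing (End (Φ.obj (m i))) := local_end_of_indec hD (h1 _ hmi)
  set q : End (Φ.obj (m i)) := (Φ.map b ≫ ρ : Φ.obj (m i) ⟶ Φ.obj (m i)) with hqdef
  have hqq : q * q = q := by
    show (Φ.map b ≫ ρ : Φ.obj (m i) ⟶ _) ≫ (Φ.map b ≫ ρ) = (Φ.map b ≫ ρ : Φ.obj (m i) ⟶ _)
    rw [Category.assoc, ← Category.assoc ρ, hρb, Category.id_comp]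
  have hsum : q + (1 - q) = 1 := by abel
  rcases IsLocalRing.isUnit_or_isUnit_of_add_one hsum with h' | h'
  · -- q = 1 : Φ.map b is an isomorphism
    have hq1 : q = 1 := h'.mul_left_cancel (by rw [mul_one]; exact hqq)
    have : IsIso (Φ.map b) := ⟨ρ, ⟨hq1, hρb⟩⟩
    obtain ⟨α2⟩ := (h3 (m i) A hmi hA).2 ⟨asIso (Φ.map b)⟩
    set e : End A := (α2.inv ≫ b : A ⟶ A) with hedef
    have : IsIso (Φ.map (α2.inv ≫ b)) := by
      rw [Φ.map_comp]; infer_instance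
    have hiso : IsIso (e : A ⟶ A) := h2 A hA e this
    refine IsSplitEpi.mk' ⟨inv (e : A ⟶ A) ≫ α2.inv ≫ biproduct.ι m i ≫ φ.inv, ?_⟩
    have : (biproduct.ι m i ≫ φ.inv) ≫ f = b := by rw [hb, hg, Category.assoc]
    rw [Category.assoc, Category.assoc, this]
    show inv (e : A ⟶ A) ≫ (α2.inv ≫ b) = 𝟙 A
    rw [← hedef, IsIso.inv_hom_id]
  · -- q = 0 : contradiction with Φ A nonzero
    exfalso
    have hq0 : q = 0 := h'.mul_left_cancel
      (by rw [mul_zero, sub_mul, one_mul, hqq, sub_self])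
    have hbz : Φ.map b = 0 := by
      have h9 : Φ.map b ≫ (ρ ≫ Φ.map b) = Φ.map b := by rw [hρb, Category.comp_id]
      rw [← Category.assoc] at h9
      rw [show (Φ.map b ≫ ρ : Φ.obj (m i) ⟶ _) = 0 from hq0, zero_comp] at h9
      exact h9.symm
    have : 𝟙 (Φ.obj A) = 0 := by rw [← hρb, hbz, comp_zero]
    exact hAD.1 ((IsZero.iff_id_eq_zero _).2 this)

lemma main_aux (hC : IsKrullSchmidt C) (hD : IsKrullSchmidt D)
    (Φ : C ⥤ D) [Φ.Additive]
    (h1 : ∀ X : C, Indecomposable X → Indecomposable (Φ.obj X))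
    (h2 : ∀ X : C, Indecomposable X → ∀ e : End X, IsIso (Φ.map e) → IsIso e)
    (h3 : ∀ X Y : C, Indecomposable X → Indecomposable Y →
      (Nonempty (X ≅ Y) ↔ Nonempty (Φ.obj X ≅ Φ.obj Y)))
    (n : ℕ) :
    ∀ (g : Fin n → C), (∀ j, IsLocalRing (End (g j))) →
      ∀ (M N : C) (α : N ≅ ⨁ g) (f : M ⟶ N),
        IsSplitEpi (Φ.map f) → IsSplitEpi f := by
  induction n with
  | zero =>
    intro g _ M N α f _
    exact IsSplitEpi.mk' ⟨0, (isZero_of_iso_biproduct_zero g α).eq_of_tgt _ _⟩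
  | succ n ih =>
    intro g hloc M N α f hf
    have hA : Indecomposable (g 0) := indec_of_local_end (hloc 0)
    obtain ⟨Ψ⟩ : Nonempty (N ≅ g 0 ⊞ (⨁ fun i : Fin n => g i.succ)) :=
      ⟨α ≪≫ finSplit g⟩
    have hf' : IsSplitEpi (Φ.map (f ≫ Ψ.hom)) := step_comp_iso Φ f Ψ hf
    refine splitEpi_of_comp_iso f Ψ (succ_step Φ (f ≫ Ψ.hom) ?_ ?_ hf')
    · exact core_indec hC hD Φ h1 h2 h3 hA ((f ≫ Ψ.hom) ≫ biprod.fst)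
        (step_fst Φ (f ≫ Ψ.hom) hf')
    · exact fun w hw => ih (fun i => g i.succ) (fun i => hloc i.succ) M _ (Iso.refl _) w hw

end Core

/-- Let `Φ : C ⥤ D` be a `K`-linear functor between Krull–Schmidt
categories such that (i) `Φ` sends indecomposables to indecomposables and the induced map
`End(X) → End(Φ X)` is a local ring homomorphism for every indecomposable `X` (i.e.
`Φ.map e` invertible implies `e` invertible), and (ii) for indecomposable `X, Y`, `X ≅ Y`
iff `Φ X ≅ Φ Y`.  Then `f : M ⟶ N` is a split surjection iff `Φ.map f` is. -/
theorem functor_reflects_split_epi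
    {K : Type*} [Field K]
    {C : Type*} [Category C] [Preadditive C] [Linear K C]
    [HasFiniteBiproducts C] [HasBinaryBiproducts C]
    {D : Type*} [Category D] [Preadditive D] [Linear K D]
    [HasFiniteBiproducts D] [HasBinaryBiproducts D]
    (hC : IsKrullSchmidt C) (hD : IsKrullSchmidt D)
    (Φ : C ⥤ D) [Φ.Additive] [Φ.Linear K]
    (h1 : ∀ X : C, Indecomposable X → Indecomposable (Φ.obj X))
    (h2 : ∀ X : C, Indecomposable X → ∀ e : End X, IsIso (Φ.map e) → IsIso e)
    (h3 : ∀ X Y : C, Indecomposable X → Indecomposable Y →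
      (Nonempty (X ≅ Y) ↔ Nonempty (Φ.obj X ≅ Φ.obj Y)))
    {M N : C} (f : M ⟶ N) :
    IsSplitEpi f ↔ IsSplitEpi (Φ.map f) := by
  constructor
  · intro hf
    obtain ⟨⟨s, hs⟩⟩ := hf
    exact IsSplitEpi.mk' ⟨Φ.map s, by rw [← Φ.map_comp, hs, Φ.map_id]⟩
  · intro hf
    obtain ⟨n, g, ⟨α⟩, hloc⟩ := hC N
    exact main_aux hC hD Φ h1 h2 h3 n g hloc M N α f hf
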